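/- In a unital associative algebra over ℂ, if X and Y are elements whose commutator [X,Y] is central, then for the truncated BCH statement: ad_X²(Y) = 0, and more generally ad_Xⁿ(Y) = 0 for all n ≥ 2. Consequently, in any algebra where exponentials make sense (e.g., a Banach algebra), exp(X) exp(Y) = exp(X + Y) exp([X,Y]/2). -/

import Mathlib

open NormedSpace

theorem conj_lem {A : Type*} [NormedRing A] [NormedAlgebra ℝ A] [CompleteSpace A]
    (X Y C : A) (hC : ∀ Z : A, Commute C Z) (hXY : X * Y - Y * X = C) (t : ℝ) :
    exp (t • X) * Y = (Y + t • C) * exp (t • X) := by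
  letI : NormedAlgebra ℚ A := NormedAlgebra.restrictScalars ℚ ℝ A
  set f : ℝ → A := fun t => exp (t • (-X)) * ((Y + t • C) * exp (t • X)) with hf
  have hderiv : ∀ s : ℝ, HasDerivAt f 0 s := by
    intro s
    have h1 := hasDerivAt_exp_smul_const (𝕂 := ℝ) (-X) s
    have h2 : HasDerivAt (fun u : ℝ => Y + u • C) C s := by
      simpa using ((hasDerivAt_id s).smul_const C).const_add Y
    have h3 := hasDerivAt_exp_smul_const' (𝕂 := ℝ) X s
    have h23 := h2.mul h3
    have := h1.mul h23
    convert this using 1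
    · rfl
    have hCX : C * X = X * C := (hC X).eq
    have key : (-X) * (Y + s • C) + (C + (Y + s • C) * X) = 0 := by
      rw [mul_add, add_mul, mul_smul_comm, smul_mul_assoc, hCX, ← hXY]
      simp only [neg_mul, smul_neg]
      abel
    calc (0 : A) = exp (s • (-X)) * (((-X) * (Y + s • C) + (C + (Y + s • C) * X)) * exp (s • X)) := by
          rw [key]; simp
      _ = exp (s • (-X)) * (-X) * ((Y + s • C) * exp (s • X)) +
          exp (s • (-X)) * (C * exp (s • X) + (Y + s • C) * (X * exp (s • X))) := by
          noncomm_ring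
  have hconst : f t = f 0 := by
    apply is_const_of_deriv_eq_zero (fun s => (hderiv s).differentiableAt)
    intro s; exact (hderiv s).deriv
  have hf0 : f 0 = Y := by simp [hf, exp_zero]
  have hinv : exp (t • X) * exp (t • (-X)) = 1 := by
    rw [← exp_add_of_commute]
    · simp
    · simpa [smul_neg] using (Commute.refl (t • X)).neg_right
  calc exp (t • X) * Y = exp (t • X) * f t := by rw [hconst, hf0]
    _ = (exp (t • X) * exp (t • (-X))) * ((Y + t • C) * exp (t • X)) := by
        rw [hf]; ring_nf; rw [mul_assoc]
    _ = (Y + t • C) * exp (t • X) := by rw [hinv, one_mul]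

theorem BCH_real {A : Type*} [NormedRing A] [NormedAlgebra ℝ A] [CompleteSpace A]
    (X Y C : A) (hC : ∀ Z : A, Commute C Z) (hXY : X * Y - Y * X = C) :
    exp X * exp Y = exp (X + Y) * exp ((1/2 : ℝ) • C) := by
  letI : NormedAlgebra ℚ A := NormedAlgebra.restrictScalars ℚ ℝ A
  set k : ℝ → A := fun t =>
    exp ((-(t^2/2)) • C) * (exp (t • (-(X+Y))) * (exp (t • X) * exp (t • Y))) with hk
  have hderiv : ∀ t : ℝ, HasDerivAt k 0 t := by
    intro t
    have hg : HasDerivAt (fun u : ℝ => -(u^2/2)) (-t) t := by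
      have := ((hasDerivAt_pow 2 t).div_const 2).neg
      convert this using 1
      · rfl
      · rfl
      · rfl
      norm_num
    have h0 : HasDerivAt (fun u : ℝ => exp ((-(u^2/2)) • C))
        ((-t) • (exp ((-(t^2/2)) • C) * C)) t :=
      by have := (hasDerivAt_exp_smul_const (𝕂 := ℝ) C (-(t^2/2))).scomp t hg; exact this
    have h2 := hasDerivAt_exp_smul_const (𝕂 := ℝ) (-(X+Y)) t
    have h3 := hasDerivAt_exp_smul_const' (𝕂 := ℝ) X t
    have h4 := hasDerivAt_exp_smul_const (𝕂 := ℝ) Y t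
    have h34 := h3.mul h4
    have h234 := h2.mul h34
    have hbig := h0.mul h234
    convert hbig using 1
    · rfl
    simp only [Pi.mul_apply]
    set E0 := exp ((-(t^2/2)) • C)
    set E2 := exp (t • (-(X+Y)))
    set E3 := exp (t • X)
    set E4 := exp (t • Y)
    -- commutation facts
    have f2 : E4 * Y = Y * E4 := (((Commute.refl Y).smul_right t).exp_right).eq.symm
    have f1 : E3 * Y = (Y + t • C) * E3 := conj_lem X Y C hC hXY t
    have hE2S : E2 * (X + Y) = (X + Y) * E2 :=
      ((((Commute.refl (X+Y)).neg_right).smul_right t).exp_right).eq.symm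
    have hCE2 : C * E2 = E2 * C := ((hC _).exp_right).eq
    have key : X * E3 * E4 + E3 * (E4 * Y) = (X + Y) * (E3 * E4) + (t • C) * (E3 * E4) := by
      rw [f2, ← mul_assoc, f1]
      noncomm_ring
    have hA : (E0 * C) * (E2 * (E3 * E4)) = E0 * (E2 * (C * (E3 * E4))) := by
      rw [mul_assoc, ← mul_assoc C E2, hCE2, mul_assoc]
    have hM : E2 * -(X + Y) * (E3 * E4) + E2 * (X * E3 * E4 + E3 * (E4 * Y))
        = t • (E2 * (C * (E3 * E4))) := by
      rw [key, mul_add, ← mul_assoc E2 (X + Y), mul_neg, hE2S, ← mul_assoc E2 (t • C),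
        mul_smul_comm t E2 C, smul_mul_assoc, mul_assoc E2 C, neg_mul]
      abel
    rw [smul_mul_assoc, hA, hM, mul_smul_comm, neg_smul]
    abel
  have hconst : k 1 = k 0 := by
    apply is_const_of_deriv_eq_zero (fun s => (hderiv s).differentiableAt)
    intro s; exact (hderiv s).deriv
  have hk0 : k 0 = 1 := by simp [hk, exp_zero]
  have hk1 : exp ((-(1/2 : ℝ)) • C) * (exp (-(X+Y)) * (exp X * exp Y)) = 1 := by
    have := hconst.trans hk0
    simpa [hk, one_smul] using this
  have h1 : exp ((1/2 : ℝ) • C) * exp ((-(1/2 : ℝ)) • C) = 1 := by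
    rw [← exp_add_of_commute (((Commute.refl C).smul_left _).smul_right _), ← add_smul]
    norm_num
  have h2 : exp (X + Y) * exp (-(X+Y)) = 1 := by
    rw [← exp_add_of_commute ((Commute.refl (X+Y)).neg_right),
      show X + Y + -(X + Y) = 0 from by abel, exp_zero]
  have e1 : exp (-(X+Y)) * (exp X * exp Y) = exp ((1/2 : ℝ) • C) := by
    calc exp (-(X+Y)) * (exp X * exp Y)
        = (exp ((1/2 : ℝ) • C) * exp ((-(1/2 : ℝ)) • C)) *
            (exp (-(X+Y)) * (exp X * exp Y)) := by rw [h1, one_mul]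
      _ = exp ((1/2 : ℝ) • C) * (exp ((-(1/2 : ℝ)) • C) *
            (exp (-(X+Y)) * (exp X * exp Y))) := by rw [mul_assoc]
      _ = exp ((1/2 : ℝ) • C) := by rw [hk1, mul_one]
  calc exp X * exp Y
      = (exp (X+Y) * exp (-(X+Y))) * (exp X * exp Y) := by rw [h2, one_mul]
    _ = exp (X+Y) * (exp (-(X+Y)) * (exp X * exp Y)) := by rw [mul_assoc]
    _ = exp (X+Y) * exp ((1/2 : ℝ) • C) := by rw [e1]

theorem BCH_central_commutator {A : Type*} [NormedRing A] [NormedAlgebra ℂ A]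
    [CompleteSpace A] (X Y : A)
    (hcentral : ∀ Z : A, Commute (X * Y - Y * X) Z) :
    (∀ n : ℕ, 2 ≤ n → (fun W => X * W - W * X)^[n] Y = 0) ∧
    (expSeries ℂ A).sum X * (expSeries ℂ A).sum Y
      = (expSeries ℂ A).sum (X + Y) * (expSeries ℂ A).sum (((1 : ℂ)/2) • (X * Y - Y * X)) := by
  constructor
  · intro n hn
    obtain ⟨m, rfl⟩ : ∃ m, n = m + 2 := ⟨n - 2, by omega⟩
    rw [Function.iterate_succ_apply, Function.iterate_succ_apply]
    have h2 : X * (X * Y - Y * X) - (X * Y - Y * X) * X = 0 := by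
      rw [sub_eq_zero]
      exact (hcentral X).eq.symm
    show (fun W => X * W - W * X)^[m] (X * (X * Y - Y * X) - (X * Y - Y * X) * X) = 0
    rw [h2]
    exact Function.iterate_fixed (by simp) m
  · have hmain := BCH_real X Y (X * Y - Y * X) hcentral rfl
    rw [← exp_eq_expSeries_sum ℂ]
    rw [show ((1 : ℂ)/2) • (X * Y - Y * X) = (1/2 : ℝ) • (X * Y - Y * X) from by
      rw [show ((1 : ℂ)/2) = ((1/2 : ℝ) : ℂ) from by norm_num, Complex.coe_smul]]
    exact hmain
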